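/- For all real numbers x, y > 0, the inequality (x·Γ(y)/Γ(y + y/x))^x · (y·Γ(x)/Γ(x + x/y))^y ≤ 1 holds, with equality if and only if x = y. -/

import Mathlib

open Real Filter Topology

namespace GammaIneqAux

/-- Elementary log inequality used for the telescoping step. -/
lemma elem {x y a b : ℝ} (hx : 0 < x) (hy : 0 < y) (ha : 0 < a) (hb : 0 < b) :
    (x * b - y * a) * (a - b) / ((a * b) * ((a + 1) * (b + 1))) ≤
      x * Real.log ((a + 1) * b / (a * (b + y / x))) +
      y * Real.log ((b + 1) * a / (b * (a + x / y))) := by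
  have hbu : 0 < b + y / x := by positivity
  have hav : 0 < a + x / y := by positivity
  have ht1 : 0 < (a + 1) * b / (a * (b + y / x)) := by positivity
  have ht2 : 0 < (b + 1) * a / (b * (a + x / y)) := by positivity
  have h1 := Real.one_sub_inv_le_log_of_pos ht1
  have h2 := Real.one_sub_inv_le_log_of_pos ht2
  have h1' := mul_le_mul_of_nonneg_left h1 hx.le
  have h2' := mul_le_mul_of_nonneg_left h2 hy.le
  have e1 : x * (1 - ((a + 1) * b / (a * (b + y / x)))⁻¹) = (x * b - y * a) / ((a + 1) * b) := by
    rw [inv_div]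
    field_simp
    ring
  have e2 : y * (1 - ((b + 1) * a / (b * (a + x / y)))⁻¹) = (y * a - x * b) / ((b + 1) * a) := by
    rw [inv_div]
    field_simp
    ring
  have e3 : (x * b - y * a) * (a - b) / ((a * b) * ((a + 1) * (b + 1))) =
      (x * b - y * a) / ((a + 1) * b) + (y * a - x * b) / ((b + 1) * a) := by
    field_simp
    ring
  rw [e1] at h1'
  rw [e2] at h2'
  rw [e3]
  linarith

/-- log of Gamma recurrence -/
lemma lrec {t : ℝ} (ht : 0 < t) :
    Real.log (Real.Gamma (t + 1)) = Real.log t + Real.log (Real.Gamma t) := by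
  rw [Real.Gamma_add_one ht.ne', Real.log_mul ht.ne' (Real.Gamma_pos_of_pos ht).ne']

/-- The remainder function. -/
noncomputable def Rf (x y t : ℝ) : ℝ :=
  x * Real.log (Real.Gamma (y + t + y / x)) + y * Real.log (Real.Gamma (x + t + x / y)) -
    x * Real.log (Real.Gamma (y + t + 1)) - y * Real.log (Real.Gamma (x + t + 1)) -
    (x - y) * (Real.log (x + t) - Real.log (y + t))

lemma step {x y : ℝ} (hy : 0 < y) (hxy : y < x) {t : ℝ} (ht : 0 ≤ t) :
    Rf x y (t + 1) +
      (x * (y + t) - y * (x + t)) * ((x + t) - (y + t)) /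
        (((x + t) * (y + t)) * (((x + t) + 1) * ((y + t) + 1))) ≤ Rf x y t := by
  have hx : 0 < x := hy.trans hxy
  have hat : 0 < x + t := by linarith
  have hbt : 0 < y + t := by linarith
  have h1 : 0 < y + t + y / x := by positivity
  have h2 : 0 < x + t + x / y := by positivity
  have h3 : 0 < y + t + 1 := by linarith
  have h4 : 0 < x + t + 1 := by linarith
  have E := elem (a := x + t) (b := y + t) hx hy hat hbt
  rw [Real.log_div (by positivity) (by positivity), Real.log_mul (by positivity) (by positivity),
    Real.log_mul (by positivity) (by positivity), Real.log_div (by positivity) (by positivity),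
    Real.log_mul (by positivity) (by positivity), Real.log_mul (by positivity) (by positivity)]
    at E
  unfold Rf
  rw [show y + (t + 1) + y / x = (y + t + y / x) + 1 from by ring,
      show x + (t + 1) + x / y = (x + t + x / y) + 1 from by ring,
      show y + (t + 1) + 1 = (y + t + 1) + 1 from by ring,
      show x + (t + 1) + 1 = (x + t + 1) + 1 from by ring,
      show x + (t + 1) = (x + t) + 1 from by ring,
      show y + (t + 1) = (y + t) + 1 from by ring,
      lrec h1, lrec h2, lrec h3, lrec h4]
  linarith

lemma tail {x y : ℝ} (hy : 0 < y) (hxy : y < x) {t : ℝ} (ht : 0 ≤ t) :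
    (x - y) * (Real.log (y + t) - Real.log (y + t + 1)) ≤ Rf x y t := by
  have hx : 0 < x := hy.trans hxy
  have hat : 0 < x + t := by linarith
  have hbt : 0 < y + t := by linarith
  have hu1 : y / x < 1 := (div_lt_one hx).mpr hxy
  have hv1 : 1 < x / y := (one_lt_div hy).mpr hxy
  have hu0 : 0 < y / x := by positivity
  have h1 : 0 < y + t + y / x := by positivity
  have h3 : 0 < y + t + 1 := by linarith
  -- first slope inequality
  have s1 := Real.convexOn_log_Gamma.slope_mono_adjacent
      (Set.mem_Ioi.mpr h1) (Set.mem_Ioi.mpr (show (0:ℝ) < y + t + 2 by linarith))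
      (show y + t + y / x < y + t + 1 by linarith)
      (show y + t + 1 < y + t + 2 by linarith)
  simp only [Function.comp_apply] at s1
  rw [show y + t + 1 - (y + t + y / x) = 1 - y / x from by ring,
      show y + t + 2 - (y + t + 1) = 1 from by ring, div_one,
      show y + t + 2 = (y + t + 1) + 1 from by ring, lrec h3] at s1
  rw [div_le_iff₀ (by linarith : (0:ℝ) < 1 - y / x)] at s1
  have A1 : x * (Real.log (Real.Gamma (y + t + 1)) - Real.log (Real.Gamma (y + t + y / x)))
      ≤ (x - y) * Real.log (y + t + 1) := by
    have h := mul_le_mul_of_nonneg_left s1 hx.le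
    have heq : x * ((Real.log (y + t + 1) + Real.log (Real.Gamma (y + t + 1)) -
        Real.log (Real.Gamma (y + t + 1))) * (1 - y / x)) = (x - y) * Real.log (y + t + 1) := by
      field_simp
      ring
    linarith
  -- second slope inequality
  have s2 := Real.convexOn_log_Gamma.slope_mono_adjacent
      (Set.mem_Ioi.mpr hat) (Set.mem_Ioi.mpr (show (0:ℝ) < x + t + x / y by positivity))
      (show x + t < x + t + 1 by linarith)
      (show x + t + 1 < x + t + x / y by linarith)
  simp only [Function.comp_apply] at s2
  rw [show x + t + 1 - (x + t) = 1 from by ring,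
      show x + t + x / y - (x + t + 1) = x / y - 1 from by ring, div_one, lrec hat] at s2
  rw [le_div_iff₀ (by linarith : (0:ℝ) < x / y - 1)] at s2
  have A2 : (x - y) * Real.log (x + t) ≤
      y * (Real.log (Real.Gamma (x + t + x / y)) - Real.log (Real.Gamma (x + t + 1))) := by
    have h := mul_le_mul_of_nonneg_left s2 hy.le
    have heq : y * ((Real.log (x + t) + Real.log (Real.Gamma (x + t)) -
        Real.log (Real.Gamma (x + t))) * (x / y - 1)) = (x - y) * Real.log (x + t) := by
      field_simp
      ring
    have heq2 : y * Real.log (Real.Gamma (x + t + 1)) =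
        y * (Real.log (x + t) + Real.log (Real.Gamma (x + t))) := by rw [lrec hat]
    linarith
  unfold Rf
  linarith

lemma main {x y : ℝ} (hy : 0 < y) (hxy : y < x) :
    x * Real.log (x * Real.Gamma y / Real.Gamma (y + y / x)) +
      y * Real.log (y * Real.Gamma x / Real.Gamma (x + x / y)) < 0 := by
  have hx : 0 < x := hy.trans hxy
  -- antitone sequence
  have hstep' : ∀ n : ℕ, Rf x y ((n : ℝ) + 1) ≤ Rf x y n := by
    intro n
    have h := step hy hxy (t := (n : ℝ)) (Nat.cast_nonneg n)
    have hnum : x * (y + (n : ℝ)) - y * (x + (n : ℝ)) = (n : ℝ) * (x - y) := by ring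
    have hb : 0 ≤ (x * (y + (n : ℝ)) - y * (x + (n : ℝ))) * ((x + (n : ℝ)) - (y + (n : ℝ))) /
        (((x + (n : ℝ)) * (y + (n : ℝ))) * (((x + (n : ℝ)) + 1) * ((y + (n : ℝ)) + 1))) := by
      apply div_nonneg
      · apply mul_nonneg
        · rw [hnum]
          have : (0:ℝ) ≤ (n : ℝ) := Nat.cast_nonneg n
          nlinarith
        · linarith
      · have h1 : (0:ℝ) < x + n := by positivity
        have h2 : (0:ℝ) < y + n := by positivity
        positivity
    linarith
  have hant : Antitone (fun n : ℕ => Rf x y n) := by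
    apply antitone_nat_of_succ_le
    intro n
    have := hstep' n
    have hc : ((n + 1 : ℕ) : ℝ) = (n : ℝ) + 1 := by push_cast; ring
    simpa [hc] using this
  -- tail limit
  have hlim : Tendsto (fun n : ℕ => (x - y) * (Real.log (y + n) - Real.log (y + n + 1)))
      atTop (𝓝 0) := by
    have hinv : Tendsto (fun n : ℕ => (y + (n : ℝ))⁻¹) atTop (𝓝 0) := by
      apply Filter.Tendsto.inv_tendsto_atTop
      exact tendsto_atTop_add_const_left _ y tendsto_natCast_atTop_atTop
    have hlow : Tendsto (fun n : ℕ => -((x - y) * (y + (n : ℝ))⁻¹)) atTop (𝓝 0) := by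
      have := (hinv.const_mul (x - y)).neg
      simpa using this
    apply tendsto_of_tendsto_of_tendsto_of_le_of_le hlow tendsto_const_nhds
    · intro n
      have h0 : (0:ℝ) < y + n := by positivity
      have hlog : Real.log (y + (n : ℝ) + 1) - Real.log (y + (n : ℝ)) ≤ (y + (n : ℝ))⁻¹ := by
        have h1 : Real.log ((y + (n : ℝ) + 1) / (y + (n : ℝ))) ≤
            (y + (n : ℝ) + 1) / (y + (n : ℝ)) - 1 := Real.log_le_sub_one_of_pos (by positivity)
        rw [Real.log_div (by positivity) (by positivity)] at h1
        have h2 : (y + (n : ℝ) + 1) / (y + (n : ℝ)) - 1 = (y + (n : ℝ))⁻¹ := by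
          field_simp
          ring
        linarith
      have := mul_le_mul_of_nonneg_left hlog (by linarith : (0:ℝ) ≤ x - y)
      nlinarith
    · intro n
      have h0 : (0:ℝ) < y + n := by positivity
      have hlog : Real.log (y + (n : ℝ)) ≤ Real.log (y + (n : ℝ) + 1) :=
        Real.log_le_log h0 (by linarith)
      have h2 := mul_le_mul_of_nonneg_left (sub_nonpos.mpr hlog) (by linarith : (0:ℝ) ≤ x - y)
      simp only
      nlinarith
  -- R 2 ≥ 0
  have hR2 : 0 ≤ Rf x y ((2 : ℕ) : ℝ) := by
    apply le_of_tendsto hlim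
    rw [eventually_atTop]
    refine ⟨2, fun n hn => ?_⟩
    exact (tail hy hxy (Nat.cast_nonneg n)).trans (hant hn)
  have hR2' : 0 ≤ Rf x y (1 + 1) := by
    have : ((2 : ℕ) : ℝ) = 1 + 1 := by norm_num
    rwa [this] at hR2
  -- strict gap between R 1 and R 2
  have hgap := step hy hxy (t := (1:ℝ)) zero_le_one
  set B : ℝ := (x * (y + 1) - y * (x + 1)) * ((x + 1) - (y + 1)) /
      (((x + 1) * (y + 1)) * (((x + 1) + 1) * ((y + 1) + 1))) with hBdef
  have hBpos : 0 < B := by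
    rw [hBdef]
    apply div_pos
    · nlinarith
    · positivity
  have h01 := step hy hxy (t := (0:ℝ)) le_rfl
  have hB0 : (x * (y + 0) - y * (x + 0)) * ((x + 0) - (y + 0)) /
      (((x + 0) * (y + 0)) * (((x + 0) + 1) * ((y + 0) + 1))) = 0 := by
    have : x * (y + 0) - y * (x + 0) = 0 := by ring
    rw [this, zero_mul, zero_div]
  rw [hB0] at h01
  have hR1 : Rf x y (0 + 1) ≤ Rf x y 0 := by linarith
  have hR0pos : 0 < Rf x y 0 := by
    have h1 : Rf x y 1 ≤ Rf x y 0 := by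
      have : (0:ℝ) + 1 = 1 := by norm_num
      rwa [this] at hR1
    linarith
  -- identify the goal with -(Rf x y 0)
  have hGy : 0 < Real.Gamma y := Real.Gamma_pos_of_pos hy
  have hGx : 0 < Real.Gamma x := Real.Gamma_pos_of_pos hx
  have hGp1 : 0 < Real.Gamma (y + y / x) := Real.Gamma_pos_of_pos (by positivity)
  have hGp4 : 0 < Real.Gamma (x + x / y) := Real.Gamma_pos_of_pos (by positivity)
  have hfinal : x * Real.log (x * Real.Gamma y / Real.Gamma (y + y / x)) +
      y * Real.log (y * Real.Gamma x / Real.Gamma (x + x / y)) = -(Rf x y 0) := by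
    unfold Rf
    rw [Real.log_div (by positivity) hGp1.ne', Real.log_mul hx.ne' hGy.ne',
        Real.log_div (by positivity) hGp4.ne', Real.log_mul hy.ne' hGx.ne',
        show y + 0 + y / x = y + y / x from by ring,
        show x + 0 + x / y = x + x / y from by ring,
        show y + 0 + 1 = y + 1 from by ring,
        show x + 0 + 1 = x + 1 from by ring,
        show x + (0:ℝ) = x from by ring,
        show y + (0:ℝ) = y from by ring,
        lrec hy, lrec hx]
    ring
  rw [hfinal]
  linarith

lemma lt_case {x y : ℝ} (hy : 0 < y) (hxy : y < x) :
    (x * Real.Gamma y / Real.Gamma (y + y / x)) ^ x *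
      (y * Real.Gamma x / Real.Gamma (x + x / y)) ^ y < 1 := by
  have hx : 0 < x := hy.trans hxy
  have hGy : 0 < Real.Gamma y := Real.Gamma_pos_of_pos hy
  have hGx : 0 < Real.Gamma x := Real.Gamma_pos_of_pos hx
  have hGp1 : 0 < Real.Gamma (y + y / x) := Real.Gamma_pos_of_pos (by positivity)
  have hGp4 : 0 < Real.Gamma (x + x / y) := Real.Gamma_pos_of_pos (by positivity)
  have hc1 : 0 < x * Real.Gamma y / Real.Gamma (y + y / x) := by positivity
  have hc2 : 0 < y * Real.Gamma x / Real.Gamma (x + x / y) := by positivity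
  rw [Real.rpow_def_of_pos hc1, Real.rpow_def_of_pos hc2, ← Real.exp_add]
  have hS := main hy hxy
  calc Real.exp (Real.log (x * Real.Gamma y / Real.Gamma (y + y / x)) * x +
        Real.log (y * Real.Gamma x / Real.Gamma (x + x / y)) * y)
      < Real.exp 0 := Real.exp_lt_exp.mpr (by linarith)
    _ = 1 := Real.exp_zero

lemma eq_case {x : ℝ} (hx : 0 < x) :
    (x * Real.Gamma x / Real.Gamma (x + x / x)) ^ x *
      (x * Real.Gamma x / Real.Gamma (x + x / x)) ^ x = 1 := by
  have h1 : x * Real.Gamma x / Real.Gamma (x + x / x) = 1 := by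
    rw [div_self hx.ne', Real.Gamma_add_one hx.ne']
    exact div_self (by positivity)
  rw [h1, Real.one_rpow, mul_one]

end GammaIneqAux

theorem gamma_inequality (x y : ℝ) (hx : 0 < x) (hy : 0 < y) :
    (x * Gamma y / Gamma (y + y / x)) ^ x * (y * Gamma x / Gamma (x + x / y)) ^ y ≤ 1 ∧
    ((x * Gamma y / Gamma (y + y / x)) ^ x * (y * Gamma x / Gamma (x + x / y)) ^ y = 1 ↔
      x = y) := by
  rcases lt_trichotomy x y with h | h | h
  · have hlt : (x * Gamma y / Gamma (y + y / x)) ^ x *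
        (y * Gamma x / Gamma (x + x / y)) ^ y < 1 := by
      have := GammaIneqAux.lt_case hx h
      linarith [mul_comm ((y * Gamma x / Gamma (x + x / y)) ^ y)
        ((x * Gamma y / Gamma (y + y / x)) ^ x)]
    exact ⟨hlt.le, ⟨fun heq => absurd heq hlt.ne, fun heq => absurd heq (ne_of_lt h)⟩⟩
  · subst h
    have heq := GammaIneqAux.eq_case hx
    exact ⟨heq.le, ⟨fun _ => rfl, fun _ => heq⟩⟩
  · have hlt := GammaIneqAux.lt_case hy h
    exact ⟨hlt.le, ⟨fun heq => absurd heq hlt.ne, fun heq => absurd heq (ne_of_gt h)⟩⟩
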